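/- Let q > 3 be a prime power, λ an integer with 1 < λ < q - 1 and λ dividing q - 1. Then (q - 1 + λ)/λ is a q-cyclotomic coset leader modulo (q^m - 1)/λ for every m ≥ 2. -/

import Mathlib

/-- The q-cyclotomic coset of `a` modulo `N`. -/
def qCoset (q N a : ℕ) : Set ℕ := {b | ∃ j : ℕ, b = a * q ^ j % N}

/-- The coset leader: the smallest element of the q-cyclotomic coset of `a` modulo `N`. -/
noncomputable def cosetLeader (q N a : ℕ) : ℕ := sInf (qCoset q N a)

/-- `a` is a coset leader modulo `N` if it is the minimum of its own coset. -/
def IsCosetLeader (q N a : ℕ) : Prop := a = cosetLeader q N a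

lemma aux1 (q1 lam Q LN : ℕ) (h2 : 2 ≤ lam) (hQ : q1 + 1 ≤ Q)
    (h1 : LN + 1 = (q1 + 1) * Q) : LN < (q1 + lam) * Q := by nlinarith

lemma aux2 (q1 lam Q LN : ℕ) (h2lam : 2 * lam ≤ q1) (hq1 : 3 ≤ q1) (hQ : q1 + 1 ≤ Q)
    (h1 : LN + 1 = (q1 + 1) * Q) : (q1 + lam) * Q < 2 * LN := by nlinarith

lemma aux3 (q1 lam Q LN : ℕ) (h2 : 2 ≤ lam) (hQ : q1 + 1 ≤ Q)
    (h1 : LN + 1 = (q1 + 1) * Q) : (q1 + lam) + LN ≤ (q1 + lam) * Q := by nlinarith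

lemma aux4 (q1 lam t P LN : ℕ) (hlam : 2 ≤ lam) (hlq : lam + 2 ≤ q1) (hP : 1 ≤ P)
    (ht : t ≤ P) (h1 : LN + 1 = (q1 + 1) * (q1 + 1) * P) : (q1 + lam) * t < LN := by
  have h2 : (q1 + lam + 1) * P ≤ ((q1 + 1) * (q1 + 1)) * P :=
    Nat.mul_le_mul_right P (by nlinarith)
  nlinarith [Nat.mul_le_mul_left (q1 + lam) ht]

theorem stmt_9 (q lam : ℕ) (hq : IsPrimePow q) (hq3 : 3 < q)
    (hl1 : 1 < lam) (hl2 : lam < q - 1) (hl : lam ∣ q - 1) :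
    ∀ m : ℕ, 2 ≤ m → IsCosetLeader q ((q ^ m - 1) / lam) ((q - 1 + lam) / lam) := by
  intro m hm
  obtain ⟨k, hk⟩ := hl
  obtain ⟨q1, rfl⟩ : ∃ q1, q = q1 + 1 := ⟨q - 1, by omega⟩
  set q := q1 + 1 with hqdef
  have hq1 : 3 ≤ q1 := by omega
  have hk' : lam * k = q1 := by omega
  have hlam2 : 2 ≤ lam := hl1
  have hk2 : 2 ≤ k := by
    rcases Nat.lt_or_ge k 2 with h | h
    · interval_cases k <;> omega
    · exact h
  have h2lam : 2 * lam ≤ q1 := by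
    calc 2 * lam = lam * 2 := by ring
    _ ≤ lam * k := Nat.mul_le_mul_left _ hk2
    _ = q1 := hk'
  have hlq : lam + 2 ≤ q1 := by omega
  have hdvd : lam ∣ q ^ m - 1 := by
    refine dvd_trans ⟨k, hk⟩ ?_
    simpa using Nat.sub_dvd_pow_sub_pow q 1 m
  set N := (q ^ m - 1) / lam with hNdef
  have hN : lam * N = q ^ m - 1 := Nat.mul_div_cancel' hdvd
  have hqmpos : 1 ≤ q ^ m := Nat.one_le_pow _ _ (by omega)
  have hqm : q ^ m = lam * N + 1 := by omega
  have ha : (q - 1 + lam) / lam = k + 1 := by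
    have h1 : q - 1 + lam = lam * (k + 1) := by
      have h0 : q - 1 = lam * k := by omega
      rw [h0]; ring
    rw [h1, Nat.mul_div_cancel_left _ (by omega)]
  rw [ha]
  -- basic power facts
  set Q := q ^ (m - 1) with hQdef
  set P := q ^ (m - 2) with hPdef
  have hQ : q ^ m = q * Q := by
    rw [hQdef]
    conv_lhs => rw [show m = (m-1)+1 by omega, pow_succ]
    ring
  have hP : Q = q * P := by
    rw [hQdef, hPdef]
    conv_lhs => rw [show m - 1 = (m-2)+1 by omega, pow_succ]
    ring
  have hP1 : 1 ≤ P := Nat.one_le_pow _ _ (by omega)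
  have hQq : q ≤ Q := by calc q = q * 1 := by ring
                              _ ≤ q * P := Nat.mul_le_mul_left _ hP1
                              _ = Q := hP.symm
  have hLNQ : lam * N + 1 = (q1 + 1) * Q := by rw [← hqm, hQ]
  have hLNP : lam * N + 1 = (q1 + 1) * (q1 + 1) * P := by
    rw [← hqm, hQ, hP]; ring
  have hmul1 : ∀ t : ℕ, lam * ((k + 1) * t) = (q1 + lam) * t := by
    intro t
    calc lam * ((k + 1) * t) = (lam * k + lam) * t := by ring
    _ = (q1 + lam) * t := by rw [hk']
  -- a < N
  have haltN : k + 1 < N := by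
    have h1 : lam * ((k + 1) * 1) < lam * N := by
      rw [hmul1]
      exact aux4 q1 lam 1 P (lam * N) hlam2 hlq hP1 hP1 hLNP
    have h2 := Nat.lt_of_mul_lt_mul_left h1
    omega
  have hmem : (k + 1) ∈ qCoset q N (k + 1) := ⟨0, by simp [Nat.mod_eq_of_lt haltN]⟩
  -- q^m ≡ 1 mod N
  have hmod : q ^ m ≡ 1 [MOD N] := by
    unfold Nat.ModEq
    rw [hqm, add_comm, mul_comm, Nat.add_mul_mod_self_left]
  -- lower bound
  have hlb : ∀ b ∈ qCoset q N (k + 1), k + 1 ≤ b := by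
    rintro b ⟨j, rfl⟩
    have hsplit : (k + 1) * q ^ j % N = (k + 1) * q ^ (j % m) % N := by
      have h1 : q ^ j = (q ^ m) ^ (j / m) * q ^ (j % m) := by
        rw [← pow_mul, ← pow_add, Nat.div_add_mod]
      have h2 : (q ^ m) ^ (j / m) ≡ 1 [MOD N] := by
        simpa using hmod.pow (j / m)
      have h3 : (k + 1) * ((q ^ m) ^ (j / m) * q ^ (j % m)) ≡
          (k + 1) * (1 * q ^ (j % m)) [MOD N] :=
        Nat.ModEq.mul_left _ (h2.mul_right _)
      rw [h1]
      simpa [Nat.ModEq] using h3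
    rw [hsplit]
    set j' := j % m with hj'def
    have hj'm : j' < m := Nat.mod_lt _ (by omega)
    by_cases hj : j' = m - 1
    · -- j' = m - 1
      rw [hj]
      have hlx : lam * ((k + 1) * Q) = (q1 + lam) * Q := hmul1 Q
      have hNlex : N ≤ (k + 1) * Q := by
        have h1 : lam * N < lam * ((k + 1) * Q) := by
          rw [hlx]
          exact aux1 q1 lam Q (lam * N) hlam2 (by omega) hLNQ
        exact (Nat.lt_of_mul_lt_mul_left h1).le
      have hxlt : (k + 1) * Q < 2 * N := by
        have h1 : lam * ((k + 1) * Q) < lam * (2 * N) := by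
          rw [hlx, show lam * (2 * N) = 2 * (lam * N) by ring]
          exact aux2 q1 lam Q (lam * N) h2lam hq1 (by omega) hLNQ
        exact Nat.lt_of_mul_lt_mul_left h1
      have hmodx : (k + 1) * Q % N = (k + 1) * Q - N := by
        rw [Nat.mod_eq_sub_mod hNlex, Nat.mod_eq_of_lt (by omega)]
      rw [hmodx]
      have hgoal : lam * (k + 1) + lam * N ≤ lam * ((k + 1) * Q) := by
        rw [hlx]
        have hk1 : lam * (k + 1) = q1 + lam := by
          have := hmul1 1
          simpa using this
        rw [hk1]
        exact aux3 q1 lam Q (lam * N) hlam2 (by omega) hLNQ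
      have h5 : lam * (k + 1) ≤ lam * ((k + 1) * Q - N) := by
        have hms : lam * ((k + 1) * Q - N) = lam * ((k + 1) * Q) - lam * N :=
          Nat.mul_sub ..
        omega
      exact Nat.le_of_mul_le_mul_left h5 (by omega)
    · -- j' ≤ m - 2
      have hj2 : j' ≤ m - 2 := by omega
      have ht : q ^ j' ≤ P := Nat.pow_le_pow_right (by omega) hj2
      have ht1 : 1 ≤ q ^ j' := Nat.one_le_pow _ _ (by omega)
      have hlt : (k + 1) * q ^ j' < N := by
        have h1 : lam * ((k + 1) * q ^ j') < lam * N := by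
          rw [hmul1]
          exact aux4 q1 lam (q ^ j') P (lam * N) hlam2 hlq hP1 ht hLNP
        exact Nat.lt_of_mul_lt_mul_left h1
      rw [Nat.mod_eq_of_lt hlt]
      calc k + 1 = (k + 1) * 1 := by ring
      _ ≤ (k + 1) * q ^ j' := Nat.mul_le_mul_left _ ht1
  -- conclude
  unfold IsCosetLeader cosetLeader
  exact le_antisymm (le_csInf ⟨_, hmem⟩ hlb) (Nat.sInf_le hmem)
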